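/- Let A : ℝ^{m×n} → ℝ^p be a linear map, let r ≥ 1 be an integer, and let α = λ_{2r,min}(A*A) and β = λ_{2r,max}(A*A) with α > 0. Let M ∈ ℝ^{m×n} with rank(M) ≤ r and σ₁ = σ₁(M) > 0. Let U ∈ ℝ^{m×κ} and V ∈ ℝ^{n×κ} satisfy rank(U) ≤ r, rank(V) ≤ r, ‖U‖ ≤ √(2σ₁), ‖V‖ ≤ √(2σ₁), and set E = UVᵀ − M, assumed nonzero. Then 2√σ₁ · √( ‖[A*A(E)]V‖_F² + ‖Uᵀ[A*A(E)]‖_F² ) ≥ (β+α)·( ‖EV‖_F² + ‖UᵀE‖_F² )/(2‖E‖_F) − 2σ₁(β−α)‖E‖_F. -/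

import Mathlib

open scoped BigOperators

noncomputable section

namespace Paper

open Matrix

/-- Euclidean dot product on `ℝ^p`. -/
def vdot {p : ℕ} (y z : Fin p → ℝ) : ℝ := ∑ i, y i * z i

/-- Euclidean norm on `ℝ^p`. -/
def vnorm {p : ℕ} (y : Fin p → ℝ) : ℝ := Real.sqrt (∑ i, (y i) ^ 2)

/-- Trace (Frobenius) inner product of matrices. -/
def finner {m n : ℕ} (X Y : Matrix (Fin m) (Fin n) ℝ) : ℝ := ∑ i, ∑ j, X i j * Y i j

/-- Frobenius norm of a matrix. -/
def fnorm {m n : ℕ} (X : Matrix (Fin m) (Fin n) ℝ) : ℝ := Real.sqrt (∑ i, ∑ j, (X i j) ^ 2)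

/-- Euclidean norm of the `j`-th column of a matrix. -/
def colNorm {m k : ℕ} (U : Matrix (Fin m) (Fin k) ℝ) (j : Fin k) : ℝ :=
  Real.sqrt (∑ i, (U i j) ^ 2)

/-- The `ℓ_{2,0}` norm of a matrix: the number of nonzero columns. -/
def l20 {m k : ℕ} (U : Matrix (Fin m) (Fin k) ℝ) : ℕ :=
  Set.ncard {j : Fin k | (fun i => U i j) ≠ 0}

/-- Number of nonzero entries of a vector. -/
def zeroNorm {k : ℕ} (z : Fin k → ℝ) : ℕ := Set.ncard {i : Fin k | z i ≠ 0}

/-- `k`-restricted smallest eigenvalue of `A*A`. -/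
def lamMin {m n p : ℕ} (A : Matrix (Fin m) (Fin n) ℝ →ₗ[ℝ] (Fin p → ℝ)) (k : ℕ) : ℝ :=
  sInf {t : ℝ | ∃ X : Matrix (Fin m) (Fin n) ℝ, X.rank ≤ k ∧ fnorm X = 1 ∧ t = (vnorm (A X)) ^ 2}

/-- `k`-restricted largest eigenvalue of `A*A`. -/
def lamMax {m n p : ℕ} (A : Matrix (Fin m) (Fin n) ℝ →ₗ[ℝ] (Fin p → ℝ)) (k : ℕ) : ℝ :=
  sSup {t : ℝ | ∃ X : Matrix (Fin m) (Fin n) ℝ, X.rank ≤ k ∧ fnorm X = 1 ∧ t = (vnorm (A X)) ^ 2}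

/-- Operator (spectral) norm of the sampling operator. -/
def opNorm {m n p : ℕ} (A : Matrix (Fin m) (Fin n) ℝ →ₗ[ℝ] (Fin p → ℝ)) : ℝ :=
  sSup {t : ℝ | ∃ X : Matrix (Fin m) (Fin n) ℝ, fnorm X = 1 ∧ t = vnorm (A X)}

/-- Spectral norm of a matrix. -/
def specNorm {a b : ℕ} (U : Matrix (Fin a) (Fin b) ℝ) : ℝ :=
  sSup {t : ℝ | ∃ x : Fin b → ℝ, vnorm x = 1 ∧ t = vnorm (U.mulVec x)}

/-- Adjoint of `A` w.r.t. the trace inner product, applied to `y`. -/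
def adjApply {m n p : ℕ} (A : Matrix (Fin m) (Fin n) ℝ →ₗ[ℝ] (Fin p → ℝ))
    (y : Fin p → ℝ) : Matrix (Fin m) (Fin n) ℝ :=
  fun i j => vdot (A (Matrix.single i j 1)) y

/-- `A*A` applied to a matrix. -/
def AstarA {m n p : ℕ} (A : Matrix (Fin m) (Fin n) ℝ →ₗ[ℝ] (Fin p → ℝ))
    (X : Matrix (Fin m) (Fin n) ℝ) : Matrix (Fin m) (Fin n) ℝ :=
  adjApply A (A X)

/-- Singular values of `X` arranged nonincreasingly, `sigmaFin X 0` the largest. -/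
def sigmaFin {m n : ℕ} (X : Matrix (Fin m) (Fin n) ℝ) : Fin m → ℝ := fun j =>
  Real.sqrt ((Matrix.isHermitian_mul_conjTranspose_self X).eigenvalues
    ((Tuple.sort (Matrix.isHermitian_mul_conjTranspose_self X).eigenvalues) j.rev))

/-- The `i`-th largest singular value (1-indexed); `0` for out-of-range indices. -/
def singularValue {m n : ℕ} (i : ℕ) (X : Matrix (Fin m) (Fin n) ℝ) : ℝ :=
  if h : 1 ≤ i ∧ i ≤ m then sigmaFin X ⟨i - 1, by omega⟩ else 0

/-- The family `𝓛` of proper lsc convex functions `φ : ℝ → (−∞,∞]` with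
`[0,1] ⊆ int(dom φ)`, `φ(1) = 1` and `min_{t ∈ [0,1]} φ(t) = 0` attained at `t*`. -/
structure LFamily where
  phi : ℝ → EReal
  lsc : LowerSemicontinuous phi
  convex : ∀ x y a b : ℝ, 0 ≤ a → 0 ≤ b → a + b = 1 →
    phi (a * x + b * y) ≤ (a : EReal) * phi x + (b : EReal) * phi y
  ne_bot : ∀ x, phi x ≠ ⊥
  icc_subset_interior_dom : Set.Icc (0 : ℝ) 1 ⊆ interior {t : ℝ | phi t ≠ ⊤}
  phi_one : phi 1 = 1
  tstar : ℝ
  tstar_mem : tstar ∈ Set.Icc (0 : ℝ) 1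
  phi_tstar : phi tstar = 0
  phi_nonneg : ∀ t ∈ Set.Icc (0 : ℝ) 1, 0 ≤ phi t

/-- Left derivative of `φ` at `1`, as the supremum of difference quotients. -/
def leftDerivOne (L : LFamily) : ℝ :=
  sSup {q : ℝ | ∃ t : ℝ, 0 ≤ t ∧ t < 1 ∧ q = (1 - (L.phi t).toReal) / (1 - t)}

/-- The function `ψ`: equal to `φ` on `[0,1]` and `+∞` elsewhere. -/
def psi (L : LFamily) (t : ℝ) : EReal := if t ∈ Set.Icc (0 : ℝ) 1 then L.phi t else ⊤

/-- The conjugate `ψ*` of `ψ`. -/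
def psiStar (L : LFamily) (s : ℝ) : EReal := ⨆ t : ℝ, ((s * t : ℝ) : EReal) - psi L t


/-! basic norm lemmas -/

lemma vnorm_nonneg {p : ℕ} (y : Fin p → ℝ) : 0 ≤ vnorm y := Real.sqrt_nonneg _
lemma fnorm_nonneg {m n : ℕ} (X : Matrix (Fin m) (Fin n) ℝ) : 0 ≤ fnorm X := Real.sqrt_nonneg _
lemma vnorm_sq {p : ℕ} (y : Fin p → ℝ) : vnorm y ^ 2 = ∑ i, (y i) ^ 2 :=
  Real.sq_sqrt (Finset.sum_nonneg fun _ _ => sq_nonneg _)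
lemma fnorm_sq {m n : ℕ} (X : Matrix (Fin m) (Fin n) ℝ) : fnorm X ^ 2 = ∑ i, ∑ j, (X i j) ^ 2 :=
  Real.sq_sqrt (Finset.sum_nonneg fun _ _ => Finset.sum_nonneg fun _ _ => sq_nonneg _)

lemma le_of_sq_le_sq {a b : ℝ} (hb : 0 ≤ b) (h : a ^ 2 ≤ b ^ 2) (ha : 0 ≤ a) : a ≤ b :=
  le_of_pow_le_pow_left₀ two_ne_zero hb h

lemma vnorm_zero {p : ℕ} : vnorm (0 : Fin p → ℝ) = 0 := by simp [vnorm]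

lemma vnorm_eq_zero {p : ℕ} {y : Fin p → ℝ} (h : vnorm y = 0) : y = 0 := by
  have h2 : vnorm y ^ 2 = 0 := by rw [h]; ring
  rw [vnorm_sq] at h2
  funext i
  have := (Finset.sum_eq_zero_iff_of_nonneg (fun i _ => sq_nonneg (y i))).1 h2 i (Finset.mem_univ i)
  exact pow_eq_zero_iff two_ne_zero |>.1 this

lemma fnorm_pos {m n : ℕ} {X : Matrix (Fin m) (Fin n) ℝ} (h : X ≠ 0) : 0 < fnorm X := by
  rcases lt_or_eq_of_le (fnorm_nonneg X) with h1 | h1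
  · exact h1
  · exfalso
    apply h
    have h2 : fnorm X ^ 2 = 0 := by rw [← h1]; ring
    rw [fnorm_sq] at h2
    ext i j
    have hi := (Finset.sum_eq_zero_iff_of_nonneg
      (fun i _ => Finset.sum_nonneg fun j _ => sq_nonneg (X i j))).1 h2 i (Finset.mem_univ i)
    have hij := (Finset.sum_eq_zero_iff_of_nonneg (fun j _ => sq_nonneg (X i j))).1 hi j
      (Finset.mem_univ j)
    simpa using pow_eq_zero_iff two_ne_zero |>.1 hij

lemma vnorm_smul {p : ℕ} (c : ℝ) (y : Fin p → ℝ) : vnorm (c • y) = |c| * vnorm y := by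
  rw [vnorm, vnorm]
  have : ∑ i, (c • y) i ^ 2 = c ^ 2 * ∑ i, y i ^ 2 := by
    rw [Finset.mul_sum]; exact Finset.sum_congr rfl fun i _ => by simp [mul_pow]
  rw [this, Real.sqrt_mul (sq_nonneg c), Real.sqrt_sq_eq_abs]

lemma fnorm_smul {m n : ℕ} (c : ℝ) (X : Matrix (Fin m) (Fin n) ℝ) :
    fnorm (c • X) = |c| * fnorm X := by
  rw [fnorm, fnorm]
  have : ∑ i, ∑ j, ((c • X) i j) ^ 2 = c ^ 2 * ∑ i, ∑ j, X i j ^ 2 := by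
    rw [Finset.mul_sum]
    exact Finset.sum_congr rfl fun i _ => by
      rw [Finset.mul_sum]; exact Finset.sum_congr rfl fun j _ => by
        simp [Matrix.smul_apply, mul_pow]
  rw [this, Real.sqrt_mul (sq_nonneg c), Real.sqrt_sq_eq_abs]

lemma sum_expand {ι : Type*} [Fintype ι] (f g : ι → ℝ) (t : ℝ) :
    ∑ i, (f i + t * g i) ^ 2 = ∑ i, f i ^ 2 + 2 * t * (∑ i, f i * g i) + t ^ 2 * ∑ i, g i ^ 2 := by
  rw [Finset.mul_sum, Finset.mul_sum, ← Finset.sum_add_distrib, ← Finset.sum_add_distrib]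
  exact Finset.sum_congr rfl fun i _ => by ring

lemma vdot_le {p : ℕ} (a b : Fin p → ℝ) : vdot a b ≤ vnorm a * vnorm b := by
  have h := Finset.sum_mul_sq_le_sq_mul_sq Finset.univ a b
  have h1 : vdot a b ≤ |vdot a b| := le_abs_self _
  have h2 : |vdot a b| = Real.sqrt ((vdot a b) ^ 2) := (Real.sqrt_sq_eq_abs _).symm
  rw [h2] at h1
  refine h1.trans ?_
  rw [vnorm, vnorm, ← Real.sqrt_mul (Finset.sum_nonneg fun _ _ => sq_nonneg _)]
  exact Real.sqrt_le_sqrt h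

lemma finner_le {m n : ℕ} (X Y : Matrix (Fin m) (Fin n) ℝ) : finner X Y ≤ fnorm X * fnorm Y := by
  have key : finner X Y = ∑ q : Fin m × Fin n, X q.1 q.2 * Y q.1 q.2 := by
    rw [finner, ← Fintype.sum_prod_type']
  have hX : fnorm X = Real.sqrt (∑ q : Fin m × Fin n, (X q.1 q.2) ^ 2) := by
    rw [fnorm, ← Fintype.sum_prod_type']
  have hY : fnorm Y = Real.sqrt (∑ q : Fin m × Fin n, (Y q.1 q.2) ^ 2) := by
    rw [fnorm, ← Fintype.sum_prod_type']
  rw [key, hX, hY]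
  have h := Finset.sum_mul_sq_le_sq_mul_sq Finset.univ (fun q : Fin m × Fin n => X q.1 q.2)
    (fun q : Fin m × Fin n => Y q.1 q.2)
  have h1 := le_abs_self (∑ q : Fin m × Fin n, X q.1 q.2 * Y q.1 q.2)
  have h2 := (Real.sqrt_sq_eq_abs (∑ q : Fin m × Fin n, X q.1 q.2 * Y q.1 q.2)).symm
  rw [h2] at h1
  refine h1.trans ?_
  rw [← Real.sqrt_mul (Finset.sum_nonneg fun _ _ => sq_nonneg _)]
  exact Real.sqrt_le_sqrt h

lemma vnorm_add_sq {p : ℕ} (a b : Fin p → ℝ) :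
    vnorm (a + b) ^ 2 = vnorm a ^ 2 + 2 * vdot a b + vnorm b ^ 2 := by
  rw [vnorm_sq, vnorm_sq, vnorm_sq, vdot]
  have := sum_expand a b 1
  simpa using this

lemma vnorm_add_le {p : ℕ} (a b : Fin p → ℝ) : vnorm (a + b) ≤ vnorm a + vnorm b := by
  apply le_of_sq_le_sq (add_nonneg (vnorm_nonneg a) (vnorm_nonneg b)) _ (vnorm_nonneg _)
  rw [vnorm_add_sq]
  have := vdot_le a b
  nlinarith [vnorm_nonneg a, vnorm_nonneg b]

lemma vnorm_sum_le {p : ℕ} {ι : Type*} (s : Finset ι) (f : ι → (Fin p → ℝ)) :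
    vnorm (∑ i ∈ s, f i) ≤ ∑ i ∈ s, vnorm (f i) := by
  classical
  induction s using Finset.induction_on with
  | empty => simp [vnorm_zero]
  | insert _ _ h ih =>
    rw [Finset.sum_insert h, Finset.sum_insert h]
    exact (vnorm_add_le _ _).trans (by linarith)


/-! spectral norm lemmas -/

lemma specNorm_nonneg {a b : ℕ} (U : Matrix (Fin a) (Fin b) ℝ) : 0 ≤ specNorm U := by
  apply Real.sSup_nonneg
  rintro t ⟨x, _, rfl⟩
  exact vnorm_nonneg _

lemma vnorm_mulVec_le_fnorm {a b : ℕ} (U : Matrix (Fin a) (Fin b) ℝ) (x : Fin b → ℝ) :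
    vnorm (U.mulVec x) ≤ fnorm U * vnorm x := by
  apply le_of_sq_le_sq (mul_nonneg (fnorm_nonneg U) (vnorm_nonneg x)) _ (vnorm_nonneg _)
  rw [mul_pow, vnorm_sq, vnorm_sq, fnorm_sq, Finset.sum_mul]
  apply Finset.sum_le_sum
  intro i _
  have h := Finset.sum_mul_sq_le_sq_mul_sq Finset.univ (fun j => U i j) x
  simpa [Matrix.mulVec, dotProduct] using h

lemma specNorm_bddAbove {a b : ℕ} (U : Matrix (Fin a) (Fin b) ℝ) :
    BddAbove {t : ℝ | ∃ x : Fin b → ℝ, vnorm x = 1 ∧ t = vnorm (U.mulVec x)} := by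
  refine ⟨fnorm U, ?_⟩
  rintro t ⟨x, hx, rfl⟩
  calc vnorm (U.mulVec x) ≤ fnorm U * vnorm x := vnorm_mulVec_le_fnorm U x
  _ = fnorm U := by rw [hx, mul_one]

lemma vnorm_mulVec_le {a b : ℕ} (U : Matrix (Fin a) (Fin b) ℝ) (x : Fin b → ℝ) :
    vnorm (U.mulVec x) ≤ specNorm U * vnorm x := by
  rcases eq_or_ne (vnorm x) 0 with h | h
  · have hx0 : x = 0 := vnorm_eq_zero h
    rw [hx0]
    simp [Matrix.mulVec_zero, vnorm_zero, specNorm_nonneg]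
  · have hx : 0 < vnorm x := lt_of_le_of_ne (vnorm_nonneg x) (Ne.symm h)
    set c := vnorm x with hc
    have h1 : vnorm ((c⁻¹ • x)) = 1 := by
      rw [vnorm_smul, abs_of_pos (inv_pos.2 hx), inv_mul_cancel₀ (ne_of_gt hx)]
    have hmem : vnorm (U.mulVec (c⁻¹ • x)) ∈
        {t : ℝ | ∃ z : Fin b → ℝ, vnorm z = 1 ∧ t = vnorm (U.mulVec z)} := ⟨_, h1, rfl⟩
    have h2 : vnorm (U.mulVec (c⁻¹ • x)) ≤ specNorm U := le_csSup (specNorm_bddAbove U) hmem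
    have h3 : U.mulVec (c⁻¹ • x) = c⁻¹ • U.mulVec x := by
      rw [Matrix.mulVec_smul]
    rw [h3, vnorm_smul, abs_of_pos (inv_pos.2 hx)] at h2
    calc vnorm (U.mulVec x) = c * (c⁻¹ * vnorm (U.mulVec x)) := by
          field_simp
    _ ≤ c * specNorm U := by
          apply mul_le_mul_of_nonneg_left h2 (le_of_lt hx)
    _ = specNorm U * vnorm x := by rw [mul_comm, hc]

lemma vnorm_sq_eq_vdot {p : ℕ} (y : Fin p → ℝ) : vnorm y ^ 2 = vdot y y := by
  rw [vnorm_sq, vdot]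
  exact Finset.sum_congr rfl fun i _ => (sq (y i)) ▸ by ring

lemma vnorm_transpose_mulVec_le {a b : ℕ} (U : Matrix (Fin a) (Fin b) ℝ) (y : Fin a → ℝ) :
    vnorm (Uᵀ.mulVec y) ≤ specNorm U * vnorm y := by
  set w := Uᵀ.mulVec y with hw
  rcases eq_or_ne (vnorm w) 0 with h | h
  · rw [h]
    exact mul_nonneg (specNorm_nonneg U) (vnorm_nonneg y)
  · have hwpos : 0 < vnorm w := lt_of_le_of_ne (vnorm_nonneg w) (Ne.symm h)
    have hwj : ∀ j, w j = ∑ i, U i j * y i := fun j => by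
      simp [hw, Matrix.mulVec, dotProduct, Matrix.transpose_apply]
    have key : vdot w w = vdot y (U.mulVec w) := by
      rw [vdot, vdot]
      calc ∑ j, w j * w j = ∑ j, (∑ i, U i j * y i) * w j :=
            Finset.sum_congr rfl fun j _ => by rw [← hwj]
      _ = ∑ j, ∑ i, y i * (U i j * w j) := by
            refine Finset.sum_congr rfl fun j _ => ?_
            rw [Finset.sum_mul]
            exact Finset.sum_congr rfl fun i _ => by ring
      _ = ∑ i, ∑ j, y i * (U i j * w j) := Finset.sum_comm
      _ = ∑ i, y i * (U.mulVec w) i := by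
            refine Finset.sum_congr rfl fun i _ => ?_
            rw [← Finset.mul_sum]
            simp [Matrix.mulVec, dotProduct]
    have h1 : vnorm w ^ 2 = vdot y (U.mulVec w) := by rw [vnorm_sq_eq_vdot, key]
    have h2 : vdot y (U.mulVec w) ≤ vnorm y * vnorm (U.mulVec w) := vdot_le _ _
    have h3 : vnorm (U.mulVec w) ≤ specNorm U * vnorm w := vnorm_mulVec_le U w
    have h4 : vnorm w ^ 2 ≤ vnorm y * (specNorm U * vnorm w) := by
      calc vnorm w ^ 2 = vdot y (U.mulVec w) := h1
      _ ≤ vnorm y * vnorm (U.mulVec w) := h2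
      _ ≤ vnorm y * (specNorm U * vnorm w) :=
          mul_le_mul_of_nonneg_left h3 (vnorm_nonneg y)
    have := mul_le_mul_of_nonneg_right (le_refl (vnorm w)) (le_of_lt hwpos)
    nlinarith [vnorm_nonneg y, specNorm_nonneg U]

/-! Frobenius norms of products -/

lemma fnorm_sq_rows {a b : ℕ} (W : Matrix (Fin a) (Fin b) ℝ) :
    fnorm W ^ 2 = ∑ i, vnorm (W i) ^ 2 := by
  rw [fnorm_sq]
  exact Finset.sum_congr rfl fun i _ => (vnorm_sq (W i)).symm

lemma fnorm_sq_cols {a b : ℕ} (W : Matrix (Fin a) (Fin b) ℝ) :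
    fnorm W ^ 2 = ∑ j, vnorm (fun i => W i j) ^ 2 := by
  rw [fnorm_sq, Finset.sum_comm]
  exact Finset.sum_congr rfl fun j _ => (vnorm_sq _).symm

lemma fnorm_mul_right_le {a b k : ℕ} (P : Matrix (Fin a) (Fin b) ℝ)
    (V : Matrix (Fin b) (Fin k) ℝ) : fnorm (P * V) ≤ specNorm V * fnorm P := by
  apply le_of_sq_le_sq (mul_nonneg (specNorm_nonneg V) (fnorm_nonneg P)) _ (fnorm_nonneg _)
  rw [mul_pow, fnorm_sq_rows (P * V), fnorm_sq_rows P, Finset.mul_sum]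
  apply Finset.sum_le_sum
  intro i _
  have hrow : (P * V) i = Vᵀ.mulVec (P i) := by
    funext j
    simp [Matrix.mul_apply, Matrix.mulVec, dotProduct, Matrix.transpose_apply, mul_comm]
  rw [hrow]
  have h := vnorm_transpose_mulVec_le V (P i)
  have := pow_le_pow_left₀ (vnorm_nonneg _) h 2
  calc vnorm (Vᵀ.mulVec (P i)) ^ 2 ≤ (specNorm V * vnorm (P i)) ^ 2 := this
  _ = specNorm V ^ 2 * vnorm (P i) ^ 2 := by ring

lemma fnorm_mul_transpose_le {a b k : ℕ} (W : Matrix (Fin a) (Fin k) ℝ)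
    (V : Matrix (Fin b) (Fin k) ℝ) : fnorm (W * Vᵀ) ≤ specNorm V * fnorm W := by
  apply le_of_sq_le_sq (mul_nonneg (specNorm_nonneg V) (fnorm_nonneg W)) _ (fnorm_nonneg _)
  rw [mul_pow, fnorm_sq_rows (W * Vᵀ), fnorm_sq_rows W, Finset.mul_sum]
  apply Finset.sum_le_sum
  intro i _
  have hrow : (W * Vᵀ) i = V.mulVec (W i) := by
    funext j
    simp [Matrix.mul_apply, Matrix.mulVec, dotProduct, Matrix.transpose_apply, mul_comm]
  rw [hrow]
  have h := vnorm_mulVec_le V (W i)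
  have := pow_le_pow_left₀ (vnorm_nonneg _) h 2
  calc vnorm (V.mulVec (W i)) ^ 2 ≤ (specNorm V * vnorm (W i)) ^ 2 := this
  _ = specNorm V ^ 2 * vnorm (W i) ^ 2 := by ring

lemma fnorm_transpose_mul_le {a b k : ℕ} (U : Matrix (Fin a) (Fin k) ℝ)
    (P : Matrix (Fin a) (Fin b) ℝ) : fnorm (Uᵀ * P) ≤ specNorm U * fnorm P := by
  apply le_of_sq_le_sq (mul_nonneg (specNorm_nonneg U) (fnorm_nonneg P)) _ (fnorm_nonneg _)
  rw [mul_pow, fnorm_sq_cols (Uᵀ * P), fnorm_sq_cols P, Finset.mul_sum]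
  apply Finset.sum_le_sum
  intro j _
  have hcol : (fun i => (Uᵀ * P) i j) = Uᵀ.mulVec (fun i => P i j) := by
    funext c
    simp [Matrix.mul_apply, Matrix.mulVec, dotProduct, Matrix.transpose_apply]
  rw [hcol]
  have h := vnorm_transpose_mulVec_le U (fun i => P i j)
  have := pow_le_pow_left₀ (vnorm_nonneg _) h 2
  calc vnorm (Uᵀ.mulVec fun i => P i j) ^ 2 ≤ (specNorm U * vnorm (fun i => P i j)) ^ 2 := this
  _ = specNorm U ^ 2 * vnorm (fun i => P i j) ^ 2 := by ring

lemma fnorm_mul_left_le {a b k : ℕ} (U : Matrix (Fin a) (Fin k) ℝ)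
    (W : Matrix (Fin k) (Fin b) ℝ) : fnorm (U * W) ≤ specNorm U * fnorm W := by
  apply le_of_sq_le_sq (mul_nonneg (specNorm_nonneg U) (fnorm_nonneg W)) _ (fnorm_nonneg _)
  rw [mul_pow, fnorm_sq_cols (U * W), fnorm_sq_cols W, Finset.mul_sum]
  apply Finset.sum_le_sum
  intro j _
  have hcol : (fun i => (U * W) i j) = U.mulVec (fun c => W c j) := by
    funext i
    simp [Matrix.mul_apply, Matrix.mulVec, dotProduct]
  rw [hcol]
  have h := vnorm_mulVec_le U (fun c => W c j)
  have := pow_le_pow_left₀ (vnorm_nonneg _) h 2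
  calc vnorm (U.mulVec fun c => W c j) ^ 2 ≤ (specNorm U * vnorm (fun c => W c j)) ^ 2 := this
  _ = specNorm U ^ 2 * vnorm (fun c => W c j) ^ 2 := by ring


/-! trace inner product identities -/

lemma finner_self {m n : ℕ} (Z : Matrix (Fin m) (Fin n) ℝ) : finner Z Z = fnorm Z ^ 2 := by
  rw [finner, fnorm_sq]
  exact Finset.sum_congr rfl fun i _ => Finset.sum_congr rfl fun j _ => (sq (Z i j)).symm

lemma finner_add_right {m n : ℕ} (G X Y : Matrix (Fin m) (Fin n) ℝ) :
    finner G (X + Y) = finner G X + finner G Y := by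
  rw [finner, finner, finner, ← Finset.sum_add_distrib]
  refine Finset.sum_congr rfl fun i _ => ?_
  rw [← Finset.sum_add_distrib]
  exact Finset.sum_congr rfl fun j _ => by simp [Matrix.add_apply]; ring

lemma finner_zero_right {m n : ℕ} (G : Matrix (Fin m) (Fin n) ℝ) : finner G 0 = 0 := by
  simp [finner]

lemma finner_mul_vt {m n k : ℕ} (G : Matrix (Fin m) (Fin n) ℝ)
    (P : Matrix (Fin m) (Fin k) ℝ) (V : Matrix (Fin n) (Fin k) ℝ) :
    finner G (P * Vᵀ) = finner (G * V) P := by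
  rw [finner, finner]
  refine Finset.sum_congr rfl fun i _ => ?_
  calc ∑ j, G i j * (P * Vᵀ) i j = ∑ j, ∑ c, G i j * (P i c * V j c) := by
        refine Finset.sum_congr rfl fun j _ => ?_
        rw [Matrix.mul_apply, Finset.mul_sum]
        exact Finset.sum_congr rfl fun c _ => by simp [Matrix.transpose_apply]
  _ = ∑ c, ∑ j, G i j * (P i c * V j c) := Finset.sum_comm
  _ = ∑ c, (G * V) i c * P i c := by
        refine Finset.sum_congr rfl fun c _ => ?_
        rw [Matrix.mul_apply, Finset.sum_mul]
        exact Finset.sum_congr rfl fun j _ => by ring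

lemma finner_u_mul {m n k : ℕ} (G : Matrix (Fin m) (Fin n) ℝ)
    (U : Matrix (Fin m) (Fin k) ℝ) (W : Matrix (Fin k) (Fin n) ℝ) :
    finner G (U * W) = finner (Uᵀ * G) W := by
  rw [finner, finner]
  calc ∑ i, ∑ j, G i j * (U * W) i j = ∑ i, ∑ j, ∑ c, U i c * (G i j * W c j) := by
        refine Finset.sum_congr rfl fun i _ => Finset.sum_congr rfl fun j _ => ?_
        rw [Matrix.mul_apply, Finset.mul_sum]
        exact Finset.sum_congr rfl fun c _ => by ring
  _ = ∑ i, ∑ c, ∑ j, U i c * (G i j * W c j) :=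
        Finset.sum_congr rfl fun i _ => Finset.sum_comm ..
  _ = ∑ c, ∑ i, ∑ j, U i c * (G i j * W c j) := Finset.sum_comm ..
  _ = ∑ c, ∑ j, ∑ i, U i c * (G i j * W c j) :=
        Finset.sum_congr rfl fun c _ => Finset.sum_comm ..
  _ = ∑ c, ∑ j, (∑ i, U i c * G i j) * W c j := by
        refine Finset.sum_congr rfl fun c _ => Finset.sum_congr rfl fun j _ => ?_
        rw [Finset.sum_mul]
        exact Finset.sum_congr rfl fun i _ => by ring
  _ = ∑ c, ∑ j, (Uᵀ * G) c j * W c j := by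
        refine Finset.sum_congr rfl fun c _ => Finset.sum_congr rfl fun j _ => ?_
        rw [Matrix.mul_apply]
        simp [Matrix.transpose_apply]

/-! the adjoint identity -/

lemma vdot_sum_left {p : ℕ} {ι : Type*} (s : Finset ι) (f : ι → (Fin p → ℝ)) (y : Fin p → ℝ) :
    vdot (∑ i ∈ s, f i) y = ∑ i ∈ s, vdot (f i) y := by
  simp only [vdot, Finset.sum_apply, Finset.sum_mul]
  exact Finset.sum_comm ..

lemma vdot_smul_left {p : ℕ} (c : ℝ) (w y : Fin p → ℝ) : vdot (c • w) y = c * vdot w y := by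
  rw [vdot, vdot, Finset.mul_sum]
  exact Finset.sum_congr rfl fun i _ => by simp [mul_assoc]

lemma vdot_comm {p : ℕ} (a b : Fin p → ℝ) : vdot a b = vdot b a := by
  rw [vdot, vdot]
  exact Finset.sum_congr rfl fun i _ => mul_comm _ _

lemma finner_adjApply {m n p : ℕ} (A : Matrix (Fin m) (Fin n) ℝ →ₗ[ℝ] (Fin p → ℝ))
    (y : Fin p → ℝ) (X : Matrix (Fin m) (Fin n) ℝ) :
    finner (adjApply A y) X = vdot (A X) y := by
  have hX : A X = ∑ i, ∑ j, X i j • A (Matrix.single i j 1) := by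
    conv_lhs => rw [Matrix.matrix_eq_sum_single X]
    rw [map_sum]
    refine Finset.sum_congr rfl fun i _ => ?_
    rw [map_sum]
    refine Finset.sum_congr rfl fun j _ => ?_
    have hs : Matrix.single i j (X i j) = X i j • Matrix.single i j (1 : ℝ) := by
      rw [Matrix.smul_single, smul_eq_mul, mul_one]
    rw [hs, _root_.map_smul]
  rw [hX, vdot_sum_left, finner, Finset.sum_congr rfl]
  intro i _
  rw [vdot_sum_left]
  refine Finset.sum_congr rfl fun j _ => ?_
  rw [vdot_smul_left, adjApply]
  ring

/-! rank lemmas -/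

lemma matrix_rank_add_le {a b : ℕ} (P Q : Matrix (Fin a) (Fin b) ℝ) :
    (P + Q).rank ≤ P.rank + Q.rank := by
  rw [Matrix.rank, Matrix.rank, Matrix.rank]
  have hrange : LinearMap.range (P + Q).mulVecLin ≤
      LinearMap.range P.mulVecLin ⊔ LinearMap.range Q.mulVecLin := by
    rintro x ⟨v, rfl⟩
    rw [Matrix.mulVecLin_add]
    exact Submodule.add_mem_sup (LinearMap.mem_range_self _ v) (LinearMap.mem_range_self _ v)
  calc Module.finrank ℝ (LinearMap.range (P + Q).mulVecLin)
      ≤ Module.finrank ℝ ↥(LinearMap.range P.mulVecLin ⊔ LinearMap.range Q.mulVecLin) :=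
        Submodule.finrank_mono hrange
  _ ≤ _ := (Submodule.finrank_add_le_finrank_add_finrank _ _)


/-! the feasible set for lamMin/lamMax -/

def lamSet {m n p : ℕ} (A : Matrix (Fin m) (Fin n) ℝ →ₗ[ℝ] (Fin p → ℝ)) (k : ℕ) : Set ℝ :=
  {t : ℝ | ∃ X : Matrix (Fin m) (Fin n) ℝ, X.rank ≤ k ∧ fnorm X = 1 ∧ t = (vnorm (A X)) ^ 2}

lemma entry_le_fnorm {m n : ℕ} (X : Matrix (Fin m) (Fin n) ℝ) (i : Fin m) (j : Fin n) :
    |X i j| ≤ fnorm X := by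
  rw [← Real.sqrt_sq_eq_abs, fnorm]
  apply Real.sqrt_le_sqrt
  calc X i j ^ 2 ≤ ∑ j', X i j' ^ 2 :=
        Finset.single_le_sum (fun j' _ => sq_nonneg (X i j')) (Finset.mem_univ j)
  _ ≤ ∑ i', ∑ j', X i' j' ^ 2 :=
        Finset.single_le_sum (f := fun i' => ∑ j', X i' j' ^ 2)
          (fun i' _ => Finset.sum_nonneg fun j' _ => sq_nonneg _) (Finset.mem_univ i)

lemma vnorm_apply_le {m n p : ℕ} (A : Matrix (Fin m) (Fin n) ℝ →ₗ[ℝ] (Fin p → ℝ))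
    (X : Matrix (Fin m) (Fin n) ℝ) :
    vnorm (A X) ≤ fnorm X * ∑ i, ∑ j, vnorm (A (Matrix.single i j 1)) := by
  have hX : A X = ∑ i, ∑ j, X i j • A (Matrix.single i j 1) := by
    conv_lhs => rw [Matrix.matrix_eq_sum_single X]
    rw [map_sum]
    refine Finset.sum_congr rfl fun i _ => ?_
    rw [map_sum]
    refine Finset.sum_congr rfl fun j _ => ?_
    have hs : Matrix.single i j (X i j) = X i j • Matrix.single i j (1 : ℝ) := by
      rw [Matrix.smul_single, smul_eq_mul, mul_one]
    rw [hs, _root_.map_smul]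
  rw [hX]
  calc vnorm (∑ i, ∑ j, X i j • A (Matrix.single i j 1))
      ≤ ∑ i, vnorm (∑ j, X i j • A (Matrix.single i j 1)) := vnorm_sum_le _ _
  _ ≤ ∑ i, ∑ j, vnorm (X i j • A (Matrix.single i j 1)) :=
        Finset.sum_le_sum fun i _ => vnorm_sum_le _ _
  _ = ∑ i, ∑ j, |X i j| * vnorm (A (Matrix.single i j 1)) :=
        Finset.sum_congr rfl fun i _ => Finset.sum_congr rfl fun j _ => vnorm_smul _ _
  _ ≤ ∑ i, ∑ j, fnorm X * vnorm (A (Matrix.single i j 1)) := by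
        refine Finset.sum_le_sum fun i _ => Finset.sum_le_sum fun j _ => ?_
        exact mul_le_mul_of_nonneg_right (entry_le_fnorm X i j) (vnorm_nonneg _)
  _ = fnorm X * ∑ i, ∑ j, vnorm (A (Matrix.single i j 1)) := by
        rw [Finset.mul_sum]
        exact Finset.sum_congr rfl fun i _ => by rw [Finset.mul_sum]

lemma lamSet_bddAbove {m n p : ℕ} (A : Matrix (Fin m) (Fin n) ℝ →ₗ[ℝ] (Fin p → ℝ)) (k : ℕ) :
    BddAbove (lamSet A k) := by
  refine ⟨(∑ i, ∑ j, vnorm (A (Matrix.single i j 1))) ^ 2, ?_⟩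
  rintro t ⟨X, _, hX1, rfl⟩
  have h := vnorm_apply_le A X
  rw [hX1, one_mul] at h
  exact pow_le_pow_left₀ (vnorm_nonneg _) h 2

lemma lamSet_bddBelow {m n p : ℕ} (A : Matrix (Fin m) (Fin n) ℝ →ₗ[ℝ] (Fin p → ℝ)) (k : ℕ) :
    BddBelow (lamSet A k) := by
  refine ⟨0, ?_⟩
  rintro t ⟨X, _, _, rfl⟩
  exact sq_nonneg _

lemma lamSet_nonempty {m n p : ℕ} (hm : 0 < m) (hn : 0 < n)
    (A : Matrix (Fin m) (Fin n) ℝ →ₗ[ℝ] (Fin p → ℝ)) (k : ℕ) (hk : 1 ≤ k) :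
    (lamSet A k).Nonempty := by
  set i0 : Fin m := ⟨0, hm⟩
  set j0 : Fin n := ⟨0, hn⟩
  set X0 : Matrix (Fin m) (Fin n) ℝ := Matrix.single i0 j0 1 with hX0
  refine ⟨(vnorm (A X0)) ^ 2, X0, ?_, ?_, rfl⟩
  · -- rank X0 ≤ k
    have hfac : X0 = (Matrix.of fun i (_ : Fin 1) => if i0 = i then (1:ℝ) else 0) *
        (Matrix.of fun (_ : Fin 1) j => if j0 = j then (1:ℝ) else 0) := by
      ext i j
      simp [hX0, Matrix.single, Matrix.mul_apply, ite_and]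
      split_ifs <;> rfl
    calc X0.rank ≤ (Matrix.of fun i (_ : Fin 1) => if i0 = i then (1:ℝ) else 0).rank := by
          rw [hfac]; exact Matrix.rank_mul_le_left _ _
    _ ≤ Fintype.card (Fin 1) := Matrix.rank_le_card_width _
    _ = 1 := by simp
    _ ≤ k := hk
  · -- fnorm X0 = 1
    rw [fnorm]
    have : ∑ i, ∑ j, (X0 i j) ^ 2 = 1 := by
      rw [hX0]
      rw [Finset.sum_eq_single i0 ?h1 ?h2]
      case h1 =>
        intro b _ hb
        apply Finset.sum_eq_zero
        intro j _
        simp [Matrix.single, Ne.symm hb]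
      case h2 => intro h; exact absurd (Finset.mem_univ i0) h
      rw [Finset.sum_eq_single j0 ?h3 ?h4]
      case h3 =>
        intro b _ hb
        simp [Matrix.single, Ne.symm hb]
      case h4 => intro h; exact absurd (Finset.mem_univ j0) h
      simp [Matrix.single]
    rw [this, Real.sqrt_one]

lemma rip_lower {m n p : ℕ} (hm : 0 < m) (hn : 0 < n)
    (A : Matrix (Fin m) (Fin n) ℝ →ₗ[ℝ] (Fin p → ℝ)) (k : ℕ) (hk : 1 ≤ k)
    (Z : Matrix (Fin m) (Fin n) ℝ) (hZ : Z.rank ≤ k) :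
    lamMin A k * fnorm Z ^ 2 ≤ vnorm (A Z) ^ 2 ∧ vnorm (A Z) ^ 2 ≤ lamMax A k * fnorm Z ^ 2 := by
  rcases eq_or_ne Z 0 with h0 | h0
  · subst h0
    have h1 : fnorm (0 : Matrix (Fin m) (Fin n) ℝ) = 0 := by simp [fnorm]
    have h2 : A 0 = 0 := map_zero A
    rw [h1, h2, vnorm_zero]
    norm_num
  · have hc : 0 < fnorm Z := fnorm_pos h0
    set c := fnorm Z with hcdef
    set Z' : Matrix (Fin m) (Fin n) ℝ := c⁻¹ • Z with hZ'
    have hZ'norm : fnorm Z' = 1 := by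
      rw [hZ', fnorm_smul, abs_of_pos (inv_pos.2 hc), inv_mul_cancel₀ (ne_of_gt hc)]
    have hZ'rank : Z'.rank ≤ k := by
      have : Z' = (c⁻¹ • (1 : Matrix (Fin m) (Fin m) ℝ)) * Z := by
        rw [Matrix.smul_mul, Matrix.one_mul]
      rw [this]
      exact le_trans (Matrix.rank_mul_le_right _ _) hZ
    have hmem : (vnorm (A Z')) ^ 2 ∈ lamSet A k := ⟨Z', hZ'rank, hZ'norm, rfl⟩
    have hlow : lamMin A k ≤ (vnorm (A Z')) ^ 2 := csInf_le (lamSet_bddBelow A k) hmem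
    have hhigh : (vnorm (A Z')) ^ 2 ≤ lamMax A k := le_csSup (lamSet_bddAbove A k) hmem
    have hZeq : Z = c • Z' := by
      rw [hZ', smul_smul, mul_inv_cancel₀ (ne_of_gt hc), one_smul]
    have hAZ : vnorm (A Z) ^ 2 = c ^ 2 * vnorm (A Z') ^ 2 := by
      conv_lhs => rw [hZeq, _root_.map_smul]
      rw [vnorm_smul, mul_pow, sq_abs]
    constructor
    · rw [hAZ]
      calc lamMin A k * c ^ 2 ≤ (vnorm (A Z')) ^ 2 * c ^ 2 :=
            mul_le_mul_of_nonneg_right hlow (sq_nonneg c)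
      _ = c ^ 2 * vnorm (A Z') ^ 2 := mul_comm _ _
    · rw [hAZ]
      calc c ^ 2 * vnorm (A Z') ^ 2 ≤ c ^ 2 * lamMax A k :=
            mul_le_mul_of_nonneg_left hhigh (sq_nonneg c)
      _ = lamMax A k * c ^ 2 := mul_comm _ _

lemma lam_le {m n p : ℕ} (hm : 0 < m) (hn : 0 < n)
    (A : Matrix (Fin m) (Fin n) ℝ →ₗ[ℝ] (Fin p → ℝ)) (k : ℕ) (hk : 1 ≤ k) :
    lamMin A k ≤ lamMax A k := by
  obtain ⟨t, ht⟩ := lamSet_nonempty hm hn A k hk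
  exact le_trans (csInf_le (lamSet_bddBelow A k) ht) (le_csSup (lamSet_bddAbove A k) ht)


/-! expansion identities -/

lemma fnorm_add_smul_sq {m n : ℕ} (E X : Matrix (Fin m) (Fin n) ℝ) (t : ℝ) :
    fnorm (E + t • X) ^ 2 = fnorm E ^ 2 + 2 * t * finner E X + t ^ 2 * fnorm X ^ 2 := by
  rw [fnorm_sq, fnorm_sq, fnorm_sq, finner]
  have key : ∀ i, ∑ j, ((E + t • X) i j) ^ 2
      = ∑ j, E i j ^ 2 + 2 * t * (∑ j, E i j * X i j) + t ^ 2 * ∑ j, X i j ^ 2 := by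
    intro i
    have h := sum_expand (fun j => E i j) (fun j => X i j) t
    simpa [Matrix.add_apply, Matrix.smul_apply, smul_eq_mul] using h
  calc ∑ i, ∑ j, ((E + t • X) i j) ^ 2
      = ∑ i, (∑ j, E i j ^ 2 + 2 * t * (∑ j, E i j * X i j) + t ^ 2 * ∑ j, X i j ^ 2) :=
        Finset.sum_congr rfl fun i _ => key i
  _ = ∑ i, ∑ j, E i j ^ 2 + 2 * t * ∑ i, ∑ j, E i j * X i j + t ^ 2 * ∑ i, ∑ j, X i j ^ 2 := by
        rw [Finset.sum_add_distrib, Finset.sum_add_distrib, ← Finset.mul_sum, ← Finset.mul_sum]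

lemma vnorm_add_smul_sq {p : ℕ} (a b : Fin p → ℝ) (t : ℝ) :
    vnorm (a + t • b) ^ 2 = vnorm a ^ 2 + 2 * t * vdot a b + t ^ 2 * vnorm b ^ 2 := by
  rw [vnorm_sq, vnorm_sq, vnorm_sq, vdot]
  have h := sum_expand a b t
  simpa [Pi.add_apply, Pi.smul_apply, smul_eq_mul] using h

/-! rank of the perturbed matrices -/

lemma rank_aux {m n κ : ℕ} (U : Matrix (Fin m) (Fin κ) ℝ) (V : Matrix (Fin n) (Fin κ) ℝ)
    (M E : Matrix (Fin m) (Fin n) ℝ) (hE : E = U * Vᵀ - M) (t : ℝ) :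
    (E + t • ((E * V) * Vᵀ + U * (Uᵀ * E))).rank ≤ U.rank + M.rank := by
  have h : E + t • ((E * V) * Vᵀ + U * (Uᵀ * E)) =
      U * (Vᵀ + t • ((Vᵀ * V) * Vᵀ) + t • (Uᵀ * E)) +
      M * (-(1 : Matrix (Fin n) (Fin n) ℝ) + (-t) • (V * Vᵀ)) := by
    subst hE
    simp only [Matrix.mul_add, Matrix.mul_sub, Matrix.sub_mul, Matrix.add_mul,
      Matrix.mul_smul, Matrix.smul_mul, Matrix.mul_assoc, Matrix.mul_one, Matrix.mul_neg,
      Matrix.neg_mul, smul_add, smul_sub, neg_smul]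
    abel
  rw [h]
  exact le_trans (matrix_rank_add_le _ _)
    (add_le_add (Matrix.rank_mul_le_left _ _) (Matrix.rank_mul_le_left _ _))


lemma fnorm_add_le {m n : ℕ} (P Q : Matrix (Fin m) (Fin n) ℝ) :
    fnorm (P + Q) ≤ fnorm P + fnorm Q := by
  apply le_of_sq_le_sq (add_nonneg (fnorm_nonneg P) (fnorm_nonneg Q)) _ (fnorm_nonneg _)
  have h : P + Q = P + (1 : ℝ) • Q := by rw [one_smul]
  rw [h, fnorm_add_smul_sq]
  have hfi := finner_le P Q
  nlinarith [fnorm_nonneg P, fnorm_nonneg Q]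


set_option maxHeartbeats 1000000 in
/-- the key inequality of Case 2 in the proof of Theorem 4.1. -/
theorem case2_key_inequality
    {m n p κ : ℕ} (A : Matrix (Fin m) (Fin n) ℝ →ₗ[ℝ] (Fin p → ℝ))
    (r : ℕ) (hr1 : 1 ≤ r) (α β : ℝ)
    (hα : α = lamMin A (2 * r)) (hβ : β = lamMax A (2 * r)) (hαpos : 0 < α)
    (M : Matrix (Fin m) (Fin n) ℝ) (hMr : M.rank ≤ r)
    (σ1 : ℝ) (hσ1 : σ1 = singularValue 1 M) (hσ1pos : 0 < σ1)
    (U : Matrix (Fin m) (Fin κ) ℝ) (V : Matrix (Fin n) (Fin κ) ℝ)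
    (hUr : U.rank ≤ r) (hVr : V.rank ≤ r)
    (hUnorm : specNorm U ≤ Real.sqrt (2 * σ1)) (hVnorm : specNorm V ≤ Real.sqrt (2 * σ1))
    (E : Matrix (Fin m) (Fin n) ℝ) (hE : E = U * Vᵀ - M) (hEne : E ≠ 0) :
    (β + α) * ((fnorm (E * V)) ^ 2 + (fnorm (Uᵀ * E)) ^ 2) / (2 * fnorm E) -
        2 * σ1 * (β - α) * fnorm E ≤
      2 * Real.sqrt σ1 *
        Real.sqrt ((fnorm ((AstarA A E) * V)) ^ 2 + (fnorm (Uᵀ * (AstarA A E))) ^ 2) := by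
  have hm : 0 < m := by
    rcases Nat.eq_zero_or_pos m with h | h
    · exfalso; apply hEne; subst h; ext i j; exact i.elim0
    · exact h
  have hn : 0 < n := by
    rcases Nat.eq_zero_or_pos n with h | h
    · exfalso; apply hEne; subst h; ext i j; exact j.elim0
    · exact h
  have hr2 : 1 ≤ 2 * r := by omega
  set G : Matrix (Fin m) (Fin n) ℝ := AstarA A E with hG
  set X : Matrix (Fin m) (Fin n) ℝ := (E * V) * Vᵀ + U * (Uᵀ * E) with hX
  set a := fnorm (E * V) with ha
  set b := fnorm (Uᵀ * E) with hb
  set S := a ^ 2 + b ^ 2 with hS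
  set e := fnorm E with heq
  set T := Real.sqrt (fnorm (G * V) ^ 2 + fnorm (Uᵀ * G) ^ 2) with hT
  set q := Real.sqrt σ1 with hq
  set x := fnorm X with hxd
  -- basic positivity
  have he : 0 < e := by rw [heq]; exact fnorm_pos hEne
  have hT0 : 0 ≤ T := by rw [hT]; exact Real.sqrt_nonneg _
  have hTsq : T ^ 2 = fnorm (G * V) ^ 2 + fnorm (Uᵀ * G) ^ 2 := by
    rw [hT]; exact Real.sq_sqrt (add_nonneg (sq_nonneg _) (sq_nonneg _))
  have ha0 : 0 ≤ a := by rw [ha]; exact fnorm_nonneg _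
  have hb0 : 0 ≤ b := by rw [hb]; exact fnorm_nonneg _
  have hS0 : 0 ≤ S := by rw [hS]; exact add_nonneg (sq_nonneg _) (sq_nonneg _)
  set s := Real.sqrt S with hsd
  clear_value G X a b S e T q x s
  have hs0 : 0 ≤ s := by rw [hsd]; exact Real.sqrt_nonneg _
  have hssq : s ^ 2 = S := by rw [hsd]; exact Real.sq_sqrt hS0
  have hq0 : 0 < q := by rw [hq]; exact Real.sqrt_pos.2 hσ1pos
  have hqsq : q ^ 2 = σ1 := by rw [hq]; exact Real.sq_sqrt hσ1pos.le
  have h2σ : Real.sqrt (2 * σ1) ^ 2 = 2 * σ1 := Real.sq_sqrt (by linarith)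
  have h2σ0 : 0 ≤ Real.sqrt (2 * σ1) := Real.sqrt_nonneg _
  have hx0 : 0 ≤ x := by rw [hxd]; exact fnorm_nonneg _
  -- spectral bounds
  have haB : a ≤ Real.sqrt (2 * σ1) * e := by
    rw [ha, heq]
    exact (fnorm_mul_right_le E V).trans
      (mul_le_mul_of_nonneg_right hVnorm (fnorm_nonneg E))
  have hbB : b ≤ Real.sqrt (2 * σ1) * e := by
    rw [hb, heq]
    exact (fnorm_transpose_mul_le U E).trans
      (mul_le_mul_of_nonneg_right hUnorm (fnorm_nonneg E))
  have ha2 : a ^ 2 ≤ 2 * σ1 * e ^ 2 := by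
    calc a ^ 2 ≤ (Real.sqrt (2 * σ1) * e) ^ 2 := pow_le_pow_left₀ ha0 haB 2
    _ = 2 * σ1 * e ^ 2 := by rw [mul_pow, h2σ]
  have hb2 : b ^ 2 ≤ 2 * σ1 * e ^ 2 := by
    calc b ^ 2 ≤ (Real.sqrt (2 * σ1) * e) ^ 2 := pow_le_pow_left₀ hb0 hbB 2
    _ = 2 * σ1 * e ^ 2 := by rw [mul_pow, h2σ]
  have hsle : s ≤ 2 * q * e := by
    apply le_of_sq_le_sq (mul_nonneg (mul_nonneg two_pos.le hq0.le) he.le) _ hs0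
    have hrhs : (2 * q * e) ^ 2 = 4 * σ1 * e ^ 2 := by
      rw [show (2 * q * e) ^ 2 = 4 * q ^ 2 * e ^ 2 by ring, hqsq]
    rw [hssq, hS, hrhs]
    linarith
  have hxle : x ≤ 2 * q * s := by
    have h1 : x ≤ Real.sqrt (2 * σ1) * (a + b) := by
      rw [hxd, hX, ha, hb]
      calc fnorm ((E * V) * Vᵀ + U * (Uᵀ * E))
          ≤ fnorm ((E * V) * Vᵀ) + fnorm (U * (Uᵀ * E)) := fnorm_add_le _ _
      _ ≤ specNorm V * fnorm (E * V) + specNorm U * fnorm (Uᵀ * E) :=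
          add_le_add (fnorm_mul_transpose_le _ _) (fnorm_mul_left_le _ _)
      _ ≤ Real.sqrt (2 * σ1) * fnorm (E * V) + Real.sqrt (2 * σ1) * fnorm (Uᵀ * E) :=
          add_le_add (mul_le_mul_of_nonneg_right hVnorm (fnorm_nonneg _))
            (mul_le_mul_of_nonneg_right hUnorm (fnorm_nonneg _))
      _ = Real.sqrt (2 * σ1) * (fnorm (E * V) + fnorm (Uᵀ * E)) := by ring
    have h2 : a + b ≤ Real.sqrt 2 * s := by
      apply le_of_sq_le_sq (mul_nonneg (Real.sqrt_nonneg 2) hs0) _ (add_nonneg ha0 hb0)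
      have hs2 : (Real.sqrt 2 * s) ^ 2 = 2 * S := by
        rw [mul_pow, Real.sq_sqrt (by norm_num : (0:ℝ) ≤ 2), hssq]
      rw [hs2, hS]
      nlinarith [sq_nonneg (a - b)]
    have h3 : Real.sqrt (2 * σ1) * Real.sqrt 2 = 2 * q := by
      rw [hq, ← Real.sqrt_mul (by linarith : (0:ℝ) ≤ 2 * σ1)]
      have : 2 * σ1 * 2 = 4 * σ1 := by ring
      rw [this, show (4:ℝ) * σ1 = 2^2 * σ1 by norm_num,
        Real.sqrt_mul (by norm_num : (0:ℝ) ≤ 2^2), Real.sqrt_sq (by norm_num : (0:ℝ) ≤ 2)]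
    calc x ≤ Real.sqrt (2 * σ1) * (a + b) := h1
    _ ≤ Real.sqrt (2 * σ1) * (Real.sqrt 2 * s) :=
        mul_le_mul_of_nonneg_left h2 h2σ0
    _ = (Real.sqrt (2 * σ1) * Real.sqrt 2) * s := by ring
    _ = 2 * q * s := by rw [h3]
  -- inner product identities
  have hEX : finner E X = S := by
    rw [hS, ha, hb, hX, finner_add_right, finner_mul_vt E (E * V) V,
      finner_u_mul E U (Uᵀ * E), finner_self (E * V), finner_self (Uᵀ * E)]
  have hGX : finner G X ≤ T * s := by
    rw [hX, finner_add_right, finner_mul_vt G (E * V) V, finner_u_mul G U (Uᵀ * E)]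
    have h1 : finner (G * V) (E * V) ≤ fnorm (G * V) * a := by
      rw [ha]; exact finner_le _ _
    have h2 : finner (Uᵀ * G) (Uᵀ * E) ≤ fnorm (Uᵀ * G) * b := by
      rw [hb]; exact finner_le _ _
    have hcs : fnorm (G * V) * a + fnorm (Uᵀ * G) * b ≤ T * s := by
      apply le_of_sq_le_sq (mul_nonneg hT0 hs0) _
        (add_nonneg (mul_nonneg (fnorm_nonneg _) ha0) (mul_nonneg (fnorm_nonneg _) hb0))
      rw [mul_pow, hTsq, hssq, hS]
      nlinarith [sq_nonneg (fnorm (G * V) * b - fnorm (Uᵀ * G) * a)]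
    linarith only [h1, h2, hcs]
  have hGXd : finner G X = vdot (A E) (A X) := by
    rw [hG, show AstarA A E = adjApply A (A E) from rfl, finner_adjApply, vdot_comm]
  have hβα : α ≤ β := by rw [hα, hβ]; exact lam_le hm hn A (2 * r) hr2
  -- the core inequality
  have hcore : (α + β) / 2 * S - (β - α) / 2 * e * x ≤ T * s := by
    rcases eq_or_ne X 0 with h0 | h0
    · have hS' : S = 0 := by rw [← hEX, h0, finner_zero_right]
      have hx' : x = 0 := by rw [hxd, h0]; simp [fnorm]
      rw [hS', hx']
      simpa using mul_nonneg hT0 hs0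
    · have hxpos : 0 < x := by rw [hxd]; exact fnorm_pos h0
      set t := e / x with ht
      have htpos : 0 < t := div_pos he hxpos
      have htx : t * x = e := div_mul_cancel₀ e (ne_of_gt hxpos)
      have hrY : (E + t • X).rank ≤ 2 * r := by
        rw [hX]
        refine le_trans (rank_aux U V M E hE t) ?_
        calc U.rank + M.rank ≤ r + r := add_le_add hUr hMr
        _ = 2 * r := by omega
      have hrZ : (E + (-t) • X).rank ≤ 2 * r := by
        rw [hX]
        refine le_trans (rank_aux U V M E hE (-t)) ?_
        calc U.rank + M.rank ≤ r + r := add_le_add hUr hMr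
        _ = 2 * r := by omega
      have hY := rip_lower hm hn A (2 * r) hr2 (E + t • X) hrY
      have hZ := rip_lower hm hn A (2 * r) hr2 (E + (-t) • X) hrZ
      have hαY : α * fnorm (E + t • X) ^ 2 ≤ vnorm (A (E + t • X)) ^ 2 := by
        rw [hα]; exact hY.1
      have hβZ : vnorm (A (E + (-t) • X)) ^ 2 ≤ β * fnorm (E + (-t) • X) ^ 2 := by
        rw [hβ]; exact hZ.2
      have hfY : fnorm (E + t • X) ^ 2 = e ^ 2 + 2 * t * S + t ^ 2 * x ^ 2 := by
        rw [fnorm_add_smul_sq E X t, hEX, ← heq, ← hxd]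
      have hfZ : fnorm (E + (-t) • X) ^ 2 = e ^ 2 - 2 * t * S + t ^ 2 * x ^ 2 := by
        rw [fnorm_add_smul_sq E X (-t), hEX, ← heq, ← hxd]; ring
      have hvY : vnorm (A (E + t • X)) ^ 2 =
          vnorm (A E) ^ 2 + 2 * t * vdot (A E) (A X) + t ^ 2 * vnorm (A X) ^ 2 := by
        rw [map_add, _root_.map_smul]
        exact vnorm_add_smul_sq (A E) (A X) t
      have hvZ : vnorm (A (E + (-t) • X)) ^ 2 =
          vnorm (A E) ^ 2 - 2 * t * vdot (A E) (A X) + t ^ 2 * vnorm (A X) ^ 2 := by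
        rw [map_add, _root_.map_smul]
        rw [vnorm_add_smul_sq (A E) (A X) (-t)]
        ring
      have hcomb : α * (e ^ 2 + 2 * t * S + t ^ 2 * x ^ 2) -
          β * (e ^ 2 - 2 * t * S + t ^ 2 * x ^ 2) ≤ 4 * t * vdot (A E) (A X) := by
        rw [← hfY, ← hfZ]
        linarith only [hαY, hβZ, hvY, hvZ]
      have hd2 : (α + β) / 2 * S - (β - α) / 2 * e * x ≤ vdot (A E) (A X) := by
        have h4t : 0 < 4 * t := by linarith
        refine le_of_mul_le_mul_left ?_ h4t
        calc 4 * t * ((α + β) / 2 * S - (β - α) / 2 * e * x)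
            = α * (e ^ 2 + 2 * t * S + t ^ 2 * x ^ 2) -
              β * (e ^ 2 - 2 * t * S + t ^ 2 * x ^ 2) := by
              have hex : e = t * x := htx.symm
              rw [hex]; ring
        _ ≤ 4 * t * vdot (A E) (A X) := hcomb
      calc (α + β) / 2 * S - (β - α) / 2 * e * x ≤ vdot (A E) (A X) := hd2
      _ = finner G X := hGXd.symm
      _ ≤ T * s := hGX
  -- final arithmetic
  have hTs : T * s ≤ 2 * q * e * T := by
    have h := mul_le_mul_of_nonneg_left hsle hT0
    linarith only [h]
  have hc0 : 0 ≤ (β - α) / 2 * e := mul_nonneg (by linarith) he.le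
  have hxq : (β - α) / 2 * e * x ≤ (β - α) / 2 * e * (2 * q * s) := by
    exact mul_le_mul_of_nonneg_left hxle hc0
  have hc1 : 0 ≤ (β - α) * q * e := mul_nonneg (mul_nonneg (by linarith) hq0.le) he.le
  have hq2 : (β - α) * q * e * s ≤ (β - α) * q * e * (2 * q * e) :=
    mul_le_mul_of_nonneg_left hsle hc1
  have hfinal : (β + α) / 2 * S - 2 * q ^ 2 * (β - α) * e ^ 2 ≤ 2 * q * T * e := by
    linarith only [hcore, hTs, hxq, hq2]
  have h2e : 0 < 2 * e := by linarith
  rw [sub_le_iff_le_add, div_le_iff₀ h2e]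
  rw [show σ1 = q ^ 2 from hqsq.symm]
  linarith only [hfinal]

end Paper
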